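/- If the null p-values are independent of each other and of the non-null p-values, each null p-value is super-uniform (P(P_j ≤ u) ≤ u for all u ∈ [0,1]), and the level sequence {α_t} is monotone, then for all t ∈ ℕ the expected oracle FDP estimate dominates the FDR: E[FDP*(t)] ≥ E[FDP(t)] = FDR(t). (Proposition 1(c)) -/

import Mathlib

open MeasureTheory ProbabilityTheory

/-- The rejection indicator history available just before testing hypothesis `t`:
the indicators `R_j = 1{P_j ≤ α_j}` for `j < t`, encoded as a boolean sequence. -/
noncomputable def rejHistory {Ω : Type*} (P alpha : ℕ → Ω → ℝ) (t : ℕ) (ω : Ω) : ℕ → Bool :=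
  fun j => decide (j < t ∧ P j ω ≤ alpha j ω)

/-- The number of rejections `|R(t)|` among the hypotheses indexed `j ≤ t`. -/
noncomputable def numRejections {Ω : Type*} (P alpha : ℕ → Ω → ℝ) (t : ℕ) (ω : Ω) : ℝ :=
  ∑ j ∈ Finset.Iic t, if P j ω ≤ alpha j ω then (1 : ℝ) else 0

open Classical in
/-- The number of false rejections `|H⁰ ∩ R(t)|` among the hypotheses indexed `j ≤ t`. -/
noncomputable def numFalseRejections {Ω : Type*} (H0 : Set ℕ) (P alpha : ℕ → Ω → ℝ)
    (t : ℕ) (ω : Ω) : ℝ :=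
  ∑ j ∈ Finset.Iic t, if j ∈ H0 ∧ P j ω ≤ alpha j ω then (1 : ℝ) else 0

/-- The false discovery proportion `FDP(t) = |H⁰ ∩ R(t)| / max(|R(t)|, 1)`. -/
noncomputable def FDP {Ω : Type*} (H0 : Set ℕ) (P alpha : ℕ → Ω → ℝ) (t : ℕ) (ω : Ω) : ℝ :=
  numFalseRejections H0 P alpha t ω / max (numRejections P alpha t ω) 1

open Classical in
/-- The oracle FDP estimate `FDP*(t) = (Σ_{j ≤ t, j ∈ H⁰} α_j) / max(|R(t)|, 1)`. -/
noncomputable def FDPstar {Ω : Type*} (H0 : Set ℕ) (P alpha : ℕ → Ω → ℝ)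
    (t : ℕ) (ω : Ω) : ℝ :=
  (∑ j ∈ Finset.Iic t, if j ∈ H0 then alpha j ω else 0) / max (numRejections P alpha t ω) 1

/-- The null p-values `{P_j : j ∈ H⁰}` are independent of each other and of
the non-null p-values: the family of σ-algebras consisting of `σ(P_j)` for each null `j`,
together with the σ-algebra generated by all non-null p-values, is independent. -/
def nullsIndep {Ω : Type*} [MeasurableSpace Ω] (μ : Measure Ω) (H0 : Set ℕ)
    (P : ℕ → Ω → ℝ) : Prop :=
  ProbabilityTheory.iIndep
    (fun i : Option {j : ℕ // j ∈ H0} =>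
      i.elim (⨆ j ∈ H0ᶜ, MeasurableSpace.comap (P j) inferInstance)
        (fun j => MeasurableSpace.comap (P j.1) inferInstance)) μ

namespace Prop1cAux

noncomputable def rejSeq (f : ℕ → (ℕ → Bool) → ℝ) (q : ℕ → ℝ) : ℕ → Bool
  | j => decide (q j ≤ f j (fun k => if _h : k < j then rejSeq f q k else false))
  termination_by j => j

noncomputable def histF (f : ℕ → (ℕ → Bool) → ℝ) (q : ℕ → ℝ) (j : ℕ) : ℕ → Bool :=
  fun k => if _h : k < j then rejSeq f q k else false

lemma rejSeq_def (f : ℕ → (ℕ → Bool) → ℝ) (q : ℕ → ℝ) (j : ℕ) :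
    rejSeq f q j = decide (q j ≤ f j (histF f q j)) := by
  rw [rejSeq]; rfl

/-- `rejSeq` at `k` depends only on `q` below `k`. -/
lemma rejSeq_congr (f : ℕ → (ℕ → Bool) → ℝ) {q q' : ℕ → ℝ} :
    ∀ k, (∀ m, m ≤ k → q' m = q m) → rejSeq f q' k = rejSeq f q k := by
  intro k
  induction k using Nat.strong_induction_on with
  | _ k IH =>
    intro hq
    rw [rejSeq_def, rejSeq_def, hq k le_rfl]
    have : histF f q' k = histF f q k := by
      funext m
      unfold histF
      by_cases h : m < k
      · simp only [h, dif_pos]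
        exact IH m h (fun i hi => hq i (le_of_lt (lt_of_le_of_lt hi h)))
      · simp [h]
    rw [this]

/-- Monotonicity: lowering p-values can only produce more rejections. -/
lemma rejSeq_mono (f : ℕ → (ℕ → Bool) → ℝ) (hmono : ∀ t, Monotone (f t))
    {q q' : ℕ → ℝ} (hle : ∀ m, q' m ≤ q m) :
    ∀ k, rejSeq f q k = true → rejSeq f q' k = true := by
  intro k
  induction k using Nat.strong_induction_on with
  | _ k IH =>
    intro hk
    rw [rejSeq_def, decide_eq_true_iff] at hk ⊢
    have hh : histF f q k ≤ histF f q' k := by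
      intro m
      unfold histF
      by_cases h : m < k
      · simp only [h, dif_pos]
        have := IH m h
        cases hq : rejSeq f q m with
        | false => simp [Bool.false_le]
        | true => rw [this hq]
      · simp [h]
    calc q' k ≤ q k := hle k
      _ ≤ f k (histF f q k) := hk
      _ ≤ f k (histF f q' k) := hmono k hh

/-- If `q'` agrees with `q` off `j0`, and at `j0` the two rejection decisions agree,
then the whole rejection sequences agree. -/
lemma rejSeq_update (f : ℕ → (ℕ → Bool) → ℝ) {q q' : ℕ → ℝ} (j0 : ℕ)
    (hq : ∀ m, m ≠ j0 → q' m = q m)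
    (hj0 : (q' j0 ≤ f j0 (histF f q j0)) ↔ (q j0 ≤ f j0 (histF f q j0))) :
    ∀ k, rejSeq f q' k = rejSeq f q k := by
  intro k
  induction k using Nat.strong_induction_on with
  | _ k IH =>
    have hhist : histF f q' k = histF f q k := by
      funext m
      unfold histF
      by_cases h : m < k
      · simp only [h, dif_pos]; exact IH m h
      · simp [h]
    rw [rejSeq_def, rejSeq_def, hhist]
    by_cases h : k = j0
    · subst h
      exact decide_eq_decide.mpr hj0
    · rw [hq k h]

/-- The rejection sequence built from the realized p-values agrees with the
realized rejection indicators. -/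
lemma rejSeq_spec {Ω : Type*} (P alpha : ℕ → Ω → ℝ) (f : ℕ → (ℕ → Bool) → ℝ)
    (hpred : ∀ t ω, alpha t ω = f t (rejHistory P alpha t ω)) (ω : Ω) :
    ∀ k, rejSeq f (fun m => P m ω) k = decide (P k ω ≤ alpha k ω) := by
  intro k
  induction k using Nat.strong_induction_on with
  | _ k IH =>
    have hhist : histF f (fun m => P m ω) k = rejHistory P alpha k ω := by
      funext m
      unfold histF rejHistory
      by_cases h : m < k
      · simp only [h, dif_pos, IH m h]
        simp [h]
      · simp [h]
    rw [rejSeq_def, hhist, ← hpred k ω]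

/-- Measurability of the rejection sequence events. -/
lemma rejSeq_measurableSet {Ω : Type*} (G : MeasurableSpace Ω) (f : ℕ → (ℕ → Bool) → ℝ)
    (q : Ω → ℕ → ℝ) (hq : ∀ k, Measurable[G] fun ω => q ω k) (k : ℕ) :
    MeasurableSet[G] {ω | rejSeq f (q ω) k = true} := by
  induction k using Nat.strong_induction_on with
  | _ k IH =>
    have hset : {ω | rejSeq f (q ω) k = true} =
        ⋃ c : Fin k → Bool, ((⋂ m : Fin k, {ω | rejSeq f (q ω) m.1 = c m}) ∩
          {ω | q ω k ≤ f k (fun m => if h : m < k then c ⟨m, h⟩ else false)}) := by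
      ext ω
      simp only [Set.mem_setOf_eq, Set.mem_iUnion, Set.mem_inter_iff, Set.mem_iInter]
      constructor
      · intro h
        refine ⟨fun m => rejSeq f (q ω) m.1, fun m => rfl, ?_⟩
        rw [rejSeq_def, decide_eq_true_iff] at h
        unfold histF at h
        exact h
      · rintro ⟨c, hc, h⟩
        rw [rejSeq_def, decide_eq_true_iff]
        have : histF f (q ω) k = fun m => if h : m < k then c ⟨m, h⟩ else false := by
          funext m
          unfold histF
          by_cases hm : m < k
          · simp only [hm, dif_pos]; exact (hc ⟨m, hm⟩).symm ▸ (hc ⟨m, hm⟩)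
          · simp [hm]
        rw [this]; exact h
    rw [hset]
    refine MeasurableSet.iUnion fun c => MeasurableSet.inter ?_ ?_
    · refine MeasurableSet.iInter fun m => ?_
      cases hcm : c m with
      | true => simpa [hcm] using IH m.1 m.2
      | false =>
        have : {ω | rejSeq f (q ω) m.1 = false} = {ω | rejSeq f (q ω) m.1 = true}ᶜ := by
          ext ω; simp
        simp only [hcm, this]
        exact (IH m.1 m.2).compl
    · exact measurableSet_le (hq k) measurable_const

/-- A bool-valued `rejSeq` coordinate equals any given boolean on a measurable event. -/
lemma rejSeq_measurableSet' {Ω : Type*} (G : MeasurableSpace Ω) (f : ℕ → (ℕ → Bool) → ℝ)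
    (q : Ω → ℕ → ℝ) (hq : ∀ k, Measurable[G] fun ω => q ω k) (k : ℕ) (c : Bool) :
    MeasurableSet[G] {ω | rejSeq f (q ω) k = c} := by
  cases c with
  | true => exact rejSeq_measurableSet G f q hq k
  | false =>
    have : {ω | rejSeq f (q ω) k = false} = {ω | rejSeq f (q ω) k = true}ᶜ := by
      ext ω; simp
    rw [this]
    exact (rejSeq_measurableSet G f q hq k).compl


/-- The sigma-algebra generated by the p-values other than `P j`. -/
def otherAlg {Ω : Type*} (P : ℕ → Ω → ℝ) (j : ℕ) : MeasurableSpace Ω :=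
  ⨆ k ∈ ({j}ᶜ : Set ℕ), MeasurableSpace.comap (P k) inferInstance

end Prop1cAux

open Prop1cAux


/-- Proposition 1(c): if the null p-values are independent of each other and of the
non-nulls, each null p-value is super-uniform, and the level sequence is monotone,
then `E[FDP*(t)] ≥ E[FDP(t)] = FDR(t)` for all `t`. -/
theorem proposition1c {Ω : Type*} [m0 : MeasurableSpace Ω]
    (μ : Measure Ω) [IsProbabilityMeasure μ]
    (P alpha : ℕ → Ω → ℝ) (H0 : Set ℕ)
    (hPmeas : ∀ j, Measurable (P j)) (hP01 : ∀ j ω, P j ω ∈ Set.Icc (0 : ℝ) 1)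
    (hameas : ∀ j, Measurable (alpha j)) (ha01 : ∀ j ω, alpha j ω ∈ Set.Ioo (0 : ℝ) 1)
    -- independence of the nulls from each other and from the non-nulls
    (hindep : nullsIndep μ H0 P)
    -- marginal super-uniformity of each null p-value
    (hnull : ∀ j ∈ H0, ∀ u ∈ Set.Icc (0 : ℝ) 1, μ {ω | P j ω ≤ u} ≤ ENNReal.ofReal u)
    -- predictability and monotonicity of the level sequence
    (f : ℕ → (ℕ → Bool) → ℝ)
    (hpred : ∀ t ω, alpha t ω = f t (rejHistory P alpha t ω))
    (hmono : ∀ t, Monotone (f t))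
    (t : ℕ) :
    ∫ ω, FDP H0 P alpha t ω ∂μ ≤ ∫ ω, FDPstar H0 P alpha t ω ∂μ := by
  classical
  set D : Ω → ℝ := fun ω => max (numRejections P alpha t ω) 1 with hDdef
  have hD1 : ∀ ω, (1:ℝ) ≤ D ω := fun ω => le_max_right _ _
  have hDpos : ∀ ω, (0:ℝ) < D ω := fun ω => lt_of_lt_of_le one_pos (hD1 ω)
  have hRmeas : ∀ k, MeasurableSet {ω | P k ω ≤ alpha k ω} :=
    fun k => measurableSet_le (hPmeas k) (hameas k)
  have hNmeas : Measurable (numRejections P alpha t) := by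
    unfold numRejections
    exact Finset.measurable_sum _ fun k _ =>
      Measurable.ite (hRmeas k) measurable_const measurable_const
  have hDmeas : Measurable D := hNmeas.max measurable_const
  have hint : ∀ g : Ω → ℝ, Measurable g → (∀ ω, |g ω| ≤ 1) → Integrable g μ := fun g hg hb =>
    (integrable_const (1:ℝ)).mono' hg.aestronglyMeasurable (Filter.Eventually.of_forall hb)
  have habs : ∀ x d : ℝ, 0 ≤ x → x ≤ 1 → 1 ≤ d → |x / d| ≤ 1 := by
    intro x d hx hx1 hd
    rw [abs_of_nonneg (div_nonneg hx (by linarith))]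
    rw [div_le_one (by linarith)]; linarith
  have hFDPeq : ∀ ω, FDP H0 P alpha t ω
      = ∑ jj ∈ Finset.Iic t, (if jj ∈ H0 ∧ P jj ω ≤ alpha jj ω then (1:ℝ) else 0) / D ω := by
    intro ω
    unfold FDP numFalseRejections
    rw [Finset.sum_div]
  have hFDPstareq : ∀ ω, FDPstar H0 P alpha t ω
      = ∑ jj ∈ Finset.Iic t, (if jj ∈ H0 then alpha jj ω else 0) / D ω := by
    intro ω
    unfold FDPstar
    rw [Finset.sum_div]
  have hmeasA : ∀ jj, Measurable fun ω =>
      (if jj ∈ H0 ∧ P jj ω ≤ alpha jj ω then (1:ℝ) else 0) / D ω := by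
    intro jj
    refine Measurable.div ?_ hDmeas
    by_cases hj : jj ∈ H0
    · simp only [hj, true_and]
      exact Measurable.ite (hRmeas jj) measurable_const measurable_const
    · simp only [hj, false_and, if_false]
      exact measurable_const
  have hintA : ∀ jj, Integrable
      (fun ω => (if jj ∈ H0 ∧ P jj ω ≤ alpha jj ω then (1:ℝ) else 0) / D ω) μ := by
    intro jj
    refine hint _ (hmeasA jj) fun ω => habs _ _ ?_ ?_ (hD1 ω) <;> split <;> norm_num
  have hmeasB : ∀ jj, Measurable fun ω => (if jj ∈ H0 then alpha jj ω else 0) / D ω := by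
    intro jj
    refine Measurable.div ?_ hDmeas
    by_cases hj : jj ∈ H0 <;> simp [hj, hameas jj]
  have hintB : ∀ jj, Integrable (fun ω => (if jj ∈ H0 then alpha jj ω else 0) / D ω) μ := by
    intro jj
    refine hint _ (hmeasB jj) fun ω => habs _ _ ?_ ?_ (hD1 ω)
    · split
      · exact (ha01 jj ω).1.le
      · exact le_rfl
    · split
      · exact (ha01 jj ω).2.le
      · exact zero_le_one
  have key : ∀ jj ∈ Finset.Iic t,
      (∫ ω, (if jj ∈ H0 ∧ P jj ω ≤ alpha jj ω then (1:ℝ) else 0) / D ω ∂μ)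
        ≤ ∫ ω, (if jj ∈ H0 then alpha jj ω else 0) / D ω ∂μ := by
    intro j hjt
    have hjt' : j ≤ t := Finset.mem_Iic.mp hjt
    by_cases hj : j ∈ H0
    swap
    · simp [hj]
    -- the hallucinated p-value sequence
    set q' : Ω → ℕ → ℝ := fun ω m => if m = j then 0 else P m ω with hq'def
    have hq'le : ∀ ω m, q' ω m ≤ P m ω := by
      intro ω m
      by_cases hm : m = j
      · subst hm; simp [hq'def, (hP01 m ω).1]
      · simp [hq'def, hm]
    have Rspec : ∀ (ω : Ω) k, rejSeq f (fun m => P m ω) k = decide (P k ω ≤ alpha k ω) :=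
      rejSeq_spec P alpha f hpred
    set Ntil : Ω → ℝ :=
      fun ω => ∑ k ∈ Finset.Iic t, if rejSeq f (q' ω) k = true then (1:ℝ) else 0 with hNtildef
    set Dt : Ω → ℝ := fun ω => max (Ntil ω) 1 with hDtdef
    have hDt1 : ∀ ω, (1:ℝ) ≤ Dt ω := fun ω => le_max_right _ _
    have hDtpos : ∀ ω, (0:ℝ) < Dt ω := fun ω => lt_of_lt_of_le one_pos (hDt1 ω)
    have hRR : ∀ (ω : Ω) k, rejSeq f (fun m => P m ω) k = true → rejSeq f (q' ω) k = true :=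
      fun ω => rejSeq_mono f hmono (fun m => hq'le ω m)
    have hNle : ∀ ω, numRejections P alpha t ω ≤ Ntil ω := by
      intro ω
      unfold numRejections
      refine Finset.sum_le_sum fun k _ => ?_
      by_cases hk : P k ω ≤ alpha k ω
      · have h1 : rejSeq f (q' ω) k = true := hRR ω k (by rw [Rspec]; exact decide_eq_true hk)
        simp [hk, h1]
      · simp only [hk, if_false]
        split
        · norm_num
        · exact le_rfl
    have hDle : ∀ ω, D ω ≤ Dt ω := fun ω => max_le_max (hNle ω) le_rfl
    -- agreement on the rejection event
    have hhisteq : ∀ ω : Ω, f j (histF f (fun m => P m ω) j) = alpha j ω := by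
      intro ω
      have h1 : histF f (fun m => P m ω) j = rejHistory P alpha j ω := by
        funext m
        unfold histF rejHistory
        by_cases h : m < j
        · simp only [h, dif_pos, Rspec ω m]
          simp [h]
        · simp [h]
      rw [h1, ← hpred]
    have hagree : ∀ ω : Ω, P j ω ≤ alpha j ω →
        ∀ k, rejSeq f (q' ω) k = rejSeq f (fun m => P m ω) k := by
      intro ω hP
      refine rejSeq_update f j (fun m hm => by simp [hq'def, hm]) ?_
      rw [hhisteq ω]
      have h0 : q' ω j = 0 := by simp [hq'def]
      rw [h0]
      exact iff_of_true (le_of_lt (ha01 j ω).1) hP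
    have hDteq : ∀ ω : Ω, P j ω ≤ alpha j ω → Dt ω = D ω := by
      intro ω hP
      have : Ntil ω = numRejections P alpha t ω := by
        unfold numRejections
        rw [hNtildef]
        refine Finset.sum_congr rfl fun k _ => ?_
        rw [hagree ω hP k, Rspec]
        simp
      show max (Ntil ω) 1 = max (numRejections P alpha t ω) 1
      rw [this]
    have hstep1 : ∀ ω, (if P j ω ≤ alpha j ω then (1:ℝ) else 0) / D ω
        = (if P j ω ≤ alpha j ω then (1:ℝ) else 0) / Dt ω := by
      intro ω
      by_cases hP : P j ω ≤ alpha j ω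
      · rw [hDteq ω hP]
      · simp [hP]
    -- the sigma-algebra generated by the other p-values
    have hGle : (otherAlg P j) ≤ m0 := iSup₂_le fun k _ => (hPmeas k).comap_le
    have hq'G : ∀ k, Measurable[(otherAlg P j)] fun ω => q' ω k := by
      intro k
      by_cases hk : k = j
      · subst hk
        simp only [hq'def, if_pos rfl]
        exact measurable_const
      · simp only [hq'def, if_neg hk]
        have h1 : Measurable[MeasurableSpace.comap (P k) inferInstance] (P k) :=
          Measurable.of_comap_le le_rfl
        exact h1.le (le_iSup₂ (f := fun k (_ : k ∈ ({j}ᶜ : Set ℕ)) =>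
          MeasurableSpace.comap (P k) inferInstance) k (by simp [hk]))
    have hR' : ∀ k c, MeasurableSet[(otherAlg P j)] {ω | rejSeq f (q' ω) k = c} :=
      rejSeq_measurableSet' (otherAlg P j) f q' hq'G
    have hR'm0 : ∀ k c, MeasurableSet {ω | rejSeq f (q' ω) k = c} := fun k c => hGle _ (hR' k c)
    have hNtilmeas : Measurable Ntil := by
      rw [hNtildef]
      exact Finset.measurable_sum _ fun k _ =>
        Measurable.ite (hR'm0 k true) measurable_const measurable_const
    have hDtmeas : Measurable Dt := hNtilmeas.max measurable_const
    -- independence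
    set mfam : Option {i : ℕ // i ∈ H0} → MeasurableSpace Ω := fun i =>
      i.elim (⨆ k ∈ H0ᶜ, MeasurableSpace.comap (P k) inferInstance)
        (fun i => MeasurableSpace.comap (P i.1) inferInstance) with hmfamdef
    have hindep' : ProbabilityTheory.iIndep mfam μ := hindep
    have hfamle : ∀ i, mfam i ≤ m0 := by
      rintro (_ | i)
      · exact iSup₂_le fun k _ => (hPmeas k).comap_le
      · exact (hPmeas i.1).comap_le
    have hInd0 : Indep (⨆ i ∈ ({some ⟨j, hj⟩} : Set (Option {i : ℕ // i ∈ H0})), mfam i)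
        (⨆ i ∈ ({some ⟨j, hj⟩}ᶜ : Set (Option {i : ℕ // i ∈ H0})), mfam i) μ :=
      indep_iSup_of_disjoint hfamle hindep' disjoint_compl_right
    have hSup1 : MeasurableSpace.comap (P j) inferInstance
        ≤ ⨆ i ∈ ({some ⟨j, hj⟩} : Set (Option {i : ℕ // i ∈ H0})), mfam i :=
      le_iSup₂_of_le (some ⟨j, hj⟩) (Set.mem_singleton _) le_rfl
    have hGT : (otherAlg P j) ≤ ⨆ i ∈ ({some ⟨j, hj⟩}ᶜ : Set (Option {i : ℕ // i ∈ H0})), mfam i := by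
      refine iSup₂_le fun k hk => ?_
      have hkj : k ≠ j := by simpa using hk
      by_cases hk0 : k ∈ H0
      · refine le_iSup₂_of_le (some ⟨k, hk0⟩) (by simp [hkj]) le_rfl
      · refine le_iSup₂_of_le none (by simp) ?_
        exact le_iSup₂ (f := fun k (_ : k ∈ H0ᶜ) =>
          MeasurableSpace.comap (P k) inferInstance) k hk0
    have hprod : ∀ (u : ℝ) (E : Set Ω), MeasurableSet[(otherAlg P j)] E →
        μ ({ω | P j ω ≤ u} ∩ E) = μ {ω | P j ω ≤ u} * μ E := by
      intro u E hE
      exact (Indep_iff _ _ _).mp hInd0 _ _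
        (hSup1 _ ⟨Set.Iic u, measurableSet_Iic, rfl⟩) (hGT _ hE)
    -- the partition according to the hallucinated rejection pattern
    set E : (Fin (t+1) → Bool) → Set Ω :=
      fun b => ⋂ k : Fin (t+1), {ω | rejSeq f (q' ω) k.1 = b k} with hEdef
    have hEG : ∀ b, MeasurableSet[(otherAlg P j)] (E b) :=
      fun b => MeasurableSet.iInter fun k => hR' k.1 (b k)
    have hEm0 : ∀ b, MeasurableSet (E b) := fun b => hGle _ (hEG b)
    have hmemE : ∀ b (ω : Ω), ω ∈ E b ↔ ∀ k : Fin (t+1), rejSeq f (q' ω) k.1 = b k := by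
      intro b ω
      simp [hEdef, Set.mem_iInter]
    have hpart : ∀ (g : Ω → ℝ) (ω : Ω),
        ∑ b : Fin (t+1) → Bool, (E b).indicator g ω = g ω := by
      intro g ω
      rw [Finset.sum_eq_single (fun k : Fin (t+1) => rejSeq f (q' ω) k.1)]
      · exact Set.indicator_of_mem ((hmemE _ ω).mpr fun k => rfl) g
      · intro b _ hb
        refine Set.indicator_of_notMem (fun hωb => hb ?_) g
        exact funext fun k => ((hmemE b ω).mp hωb k).symm
      · intro h
        exact absurd (Finset.mem_univ _) h
    have hsplit : ∀ g : Ω → ℝ, Integrable g μ →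
        ∫ ω, g ω ∂μ = ∑ b : Fin (t+1) → Bool, ∫ ω in E b, g ω ∂μ := by
      intro g hg
      have h0 : ∫ ω, g ω ∂μ = ∫ ω, ∑ b : Fin (t+1) → Bool, (E b).indicator g ω ∂μ := by
        congr 1
        funext ω
        rw [hpart]
      rw [h0, integral_finset_sum _ fun b _ => hg.indicator (hEm0 b)]
      exact Finset.sum_congr rfl fun b _ => integral_indicator (hEm0 b)
    -- constants on each partition cell
    set a : (Fin (t+1) → Bool) → ℝ :=
      fun b => f j (fun m => if h : m < j then b ⟨m, by omega⟩ else false) with hadef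
    set d : (Fin (t+1) → Bool) → ℝ :=
      fun b => max (∑ k : Fin (t+1), if b k then (1:ℝ) else 0) 1 with hddef
    have hd1 : ∀ b, (1:ℝ) ≤ d b := fun b => le_max_right _ _
    have hdpos : ∀ b, (0:ℝ) < d b := fun b => lt_of_lt_of_le one_pos (hd1 b)
    have hIic : Finset.Iic t = Finset.range (t+1) := by
      ext x
      simp [Nat.lt_succ_iff]
    have hDtb : ∀ b, ∀ ω ∈ E b, Dt ω = d b := by
      intro b ω hω
      have h1 : Ntil ω = ∑ k : Fin (t+1), if b k then (1:ℝ) else 0 := by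
        rw [hNtildef]
        simp only
        rw [hIic, ← Fin.sum_univ_eq_sum_range (fun k => if rejSeq f (q' ω) k = true then (1:ℝ) else 0)]
        exact Finset.sum_congr rfl fun k _ => by rw [(hmemE b ω).mp hω k]
      rw [hDtdef]
      simp only
      rw [h1, hddef]
    have hab : ∀ b, ∀ ω ∈ E b, alpha j ω = a b := by
      intro b ω hω
      rw [hpred j ω, hadef]
      congr 1
      funext m
      unfold rejHistory
      by_cases hm : m < j
      · have h2 : rejSeq f (q' ω) m = rejSeq f (fun i => P i ω) m :=
          rejSeq_congr f m (fun i hi => by simp [hq'def, show i ≠ j by omega])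
        have h3 : rejSeq f (q' ω) m = b ⟨m, by omega⟩ := (hmemE b ω).mp hω ⟨m, by omega⟩
        have h4 : decide (m < j ∧ P m ω ≤ alpha m ω) = rejSeq f (fun i => P i ω) m := by
          rw [Rspec]
          simp [hm]
        rw [h4, ← h2, h3]
        simp [hm]
      · simp [hm]
    -- integrability of the intermediate functions
    have hg1meas : Measurable (fun ω => (if P j ω ≤ alpha j ω then (1:ℝ) else 0) / Dt ω) :=
      Measurable.div (Measurable.ite (hRmeas j) measurable_const measurable_const) hDtmeas
    have hg1int : Integrable (fun ω => (if P j ω ≤ alpha j ω then (1:ℝ) else 0) / Dt ω) μ := by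
      refine hint _ hg1meas fun ω => habs _ _ ?_ ?_ (hDt1 ω) <;> split <;> norm_num
    have hg2meas : Measurable (fun ω => alpha j ω / Dt ω) := (hameas j).div hDtmeas
    have hg2int : Integrable (fun ω => alpha j ω / Dt ω) μ :=
      hint _ hg2meas fun ω => habs _ _ (ha01 j ω).1.le (ha01 j ω).2.le (hDt1 ω)
    have hg3meas : Measurable (fun ω => alpha j ω / D ω) := (hameas j).div hDmeas
    have hg3int : Integrable (fun ω => alpha j ω / D ω) μ :=
      hint _ hg3meas fun ω => habs _ _ (ha01 j ω).1.le (ha01 j ω).2.le (hD1 ω)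
    -- per-cell comparison
    have hperb : ∀ b : Fin (t+1) → Bool,
        (∫ ω in E b, (if P j ω ≤ alpha j ω then (1:ℝ) else 0) / Dt ω ∂μ)
          ≤ ∫ ω in E b, alpha j ω / Dt ω ∂μ := by
      intro b
      have hSmeas : MeasurableSet {ω | P j ω ≤ a b} := measurableSet_le (hPmeas j) measurable_const
      have hlhs : (∫ ω in E b, (if P j ω ≤ alpha j ω then (1:ℝ) else 0) / Dt ω ∂μ)
          = (μ (E b ∩ {ω | P j ω ≤ a b})).toReal • ((1:ℝ) / d b) := by
        rw [setIntegral_congr_fun (hEm0 b)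
          (g := fun ω => Set.indicator {ω' | P j ω' ≤ a b} (fun _ => (1:ℝ) / d b) ω) ?_]
        · rw [setIntegral_indicator hSmeas, setIntegral_const]; rfl
        · intro ω hω
          show (if P j ω ≤ alpha j ω then (1:ℝ) else 0) / Dt ω
              = Set.indicator {ω' | P j ω' ≤ a b} (fun _ => (1:ℝ) / d b) ω
          rw [Set.indicator_apply]
          by_cases hP : P j ω ≤ alpha j ω
          · have : P j ω ≤ a b := (hab b ω hω) ▸ hP
            simp only [hP, if_true, hDtb b ω hω, Set.mem_setOf_eq, this]
          · have : ¬ P j ω ≤ a b := fun h => hP ((hab b ω hω).symm ▸ h)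
            simp [hP, this]
      have hrhs : (∫ ω in E b, alpha j ω / Dt ω ∂μ) = (μ (E b)).toReal • (a b / d b) := by
        rw [setIntegral_congr_fun (hEm0 b) (g := fun _ => a b / d b)
          (fun ω hω => by rw [hab b ω hω, hDtb b ω hω]), setIntegral_const]
        rfl
      rw [hlhs, hrhs]
      by_cases hμ : μ (E b) = 0
      · have h0 : μ (E b ∩ {ω | P j ω ≤ a b}) = 0 :=
          le_antisymm (le_trans (measure_mono Set.inter_subset_left) hμ.le) zero_le
        rw [h0, hμ]
        simp
      · obtain ⟨ω0, hω0⟩ := nonempty_of_measure_ne_zero hμ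
        have haIoo : a b ∈ Set.Ioo (0:ℝ) 1 := (hab b ω0 hω0) ▸ ha01 j ω0
        have hμS : μ {ω | P j ω ≤ a b} ≤ ENNReal.ofReal (a b) :=
          hnull j hj _ ⟨haIoo.1.le, haIoo.2.le⟩
        have hprod' : μ (E b ∩ {ω | P j ω ≤ a b})
            = μ {ω | P j ω ≤ a b} * μ (E b) := by
          rw [Set.inter_comm]
          exact hprod (a b) (E b) (hEG b)
        have hxa : (μ {ω | P j ω ≤ a b}).toReal ≤ a b :=
          ENNReal.toReal_le_of_le_ofReal haIoo.1.le hμS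
        rw [hprod', ENNReal.toReal_mul, smul_eq_mul, smul_eq_mul]
        have h1 : (μ {ω | P j ω ≤ a b}).toReal * (μ (E b)).toReal * (1 / d b)
            = ((μ {ω | P j ω ≤ a b}).toReal * (μ (E b)).toReal) / d b := by ring
        have h2 : (μ (E b)).toReal * (a b / d b) = (a b * (μ (E b)).toReal) / d b := by ring
        rw [h1, h2]
        apply div_le_div_of_nonneg_right ?_ (hdpos b).le
        · exact mul_le_mul_of_nonneg_right hxa ENNReal.toReal_nonneg
    -- assemble the per-index chain
    calc (∫ ω, (if j ∈ H0 ∧ P j ω ≤ alpha j ω then (1:ℝ) else 0) / D ω ∂μ)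
        = ∫ ω, (if P j ω ≤ alpha j ω then (1:ℝ) else 0) / Dt ω ∂μ := by
          congr 1
          funext ω
          rw [← hstep1 ω]
          simp [hj]
      _ = ∑ b : Fin (t+1) → Bool,
            ∫ ω in E b, (if P j ω ≤ alpha j ω then (1:ℝ) else 0) / Dt ω ∂μ := hsplit _ hg1int
      _ ≤ ∑ b : Fin (t+1) → Bool, ∫ ω in E b, alpha j ω / Dt ω ∂μ :=
          Finset.sum_le_sum fun b _ => hperb b
      _ = ∫ ω, alpha j ω / Dt ω ∂μ := (hsplit _ hg2int).symm
      _ ≤ ∫ ω, alpha j ω / D ω ∂μ := by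
          refine integral_mono hg2int hg3int fun ω => ?_
          exact div_le_div_of_nonneg_left (ha01 j ω).1.le (hDpos ω) (hDle ω)
      _ = ∫ ω, (if j ∈ H0 then alpha j ω else 0) / D ω ∂μ := by
          congr 1
          funext ω
          simp [hj]
  calc (∫ ω, FDP H0 P alpha t ω ∂μ)
      = ∑ jj ∈ Finset.Iic t,
          ∫ ω, (if jj ∈ H0 ∧ P jj ω ≤ alpha jj ω then (1:ℝ) else 0) / D ω ∂μ := by
        rw [integral_congr_ae (Filter.Eventually.of_forall hFDPeq)]
        exact integral_finset_sum _ fun jj _ => hintA jj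
    _ ≤ ∑ jj ∈ Finset.Iic t, ∫ ω, (if jj ∈ H0 then alpha jj ω else 0) / D ω ∂μ :=
        Finset.sum_le_sum key
    _ = ∫ ω, FDPstar H0 P alpha t ω ∂μ := by
        rw [← integral_finset_sum _ fun jj _ => hintB jj]
        exact integral_congr_ae (Filter.Eventually.of_forall fun ω => (hFDPstareq ω).symm)
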